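/- Let k ≥ 1 be an integer and let m be a positive odd integer with gcd(k, m) = 1. Then the number of pairs (x, y) ∈ F_{2^m} × F_{2^m} with y^2 + y = x^{2^k+1} + x equals the number of pairs (x, y) ∈ F_{2^m} × F_{2^m} with y^2 + y = x^3 + x. (That is, the curves C_k and C_1 have the same number of affine rational points over F_{2^m}.) -/

import Mathlib

open Finset

namespace Stmt16Aux

variable {F : Type*} [Field F] [CharP F 2]

/-- `LL k x = ∑_{i<k} x^{2^i}`. -/
def LL (k : ℕ) (x : F) : F := ∑ i ∈ range k, x ^ (2 ^ i)

lemma psi_sum {ι : Type*} (s : Finset ι) (f : ι → F) :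
    (∑ i ∈ s, f i) ^ 2 + ∑ i ∈ s, f i = ∑ i ∈ s, ((f i) ^ 2 + f i) := by
  rw [CharTwo.sum_sq, sum_add_distrib]

lemma LL_spec (k : ℕ) (x : F) : (LL k x) ^ 2 + LL k x = x ^ (2 ^ k) + x := by
  have h := Finset.sum_range_sub (f := fun i => x ^ (2 ^ i)) k
  unfold LL
  rw [psi_sum]
  calc ∑ i ∈ range k, ((x ^ 2 ^ i) ^ 2 + x ^ 2 ^ i)
      = ∑ i ∈ range k, (x ^ 2 ^ (i + 1) - x ^ 2 ^ i) := by
        refine sum_congr rfl fun i _ => ?_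
        rw [CharTwo.sub_eq_add, ← pow_mul, ← pow_succ]
    _ = x ^ 2 ^ k - x ^ 2 ^ 0 := h
    _ = x ^ 2 ^ k + x := by rw [CharTwo.sub_eq_add, pow_zero, pow_one]

lemma LL_add (k : ℕ) (x y : F) : LL k (x + y) = LL k x + LL k y := by
  unfold LL
  rw [← sum_add_distrib]
  exact sum_congr rfl fun i _ => add_pow_char_pow x y 2 i

/-- witness for the Artin–Schreier difference -/
def WW (k : ℕ) (x : F) : F :=
  (∑ i ∈ range k, LL i (x ^ (2 ^ (k - i) + 1))) + LL k x + x

lemma key (k : ℕ) (x : F) :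
    (LL k x) ^ 3 + LL k x = x ^ (2 ^ k + 1) + x + ((WW k x) ^ 2 + WW k x) := by
  have htwo : (2 : F) = 0 := CharTwo.two_eq_zero
  have h1 := LL_spec k x
  have psiadd : ∀ a b : F, (a + b) ^ 2 + (a + b) = (a ^ 2 + a) + (b ^ 2 + b) := by
    intro a b; rw [CharTwo.add_sq]; ring
  have h2 : (WW k x) ^ 2 + WW k x
      = ((∑ i ∈ range k, x ^ (2 ^ k + 2 ^ i)) + (∑ i ∈ range k, x ^ (2 ^ (k - i) + 1)))
        + ((x ^ (2 ^ k) + x) + (x ^ 2 + x)) := by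
    unfold WW
    rw [psiadd, psiadd, LL_spec, psi_sum]
    have hS : ∑ i ∈ range k, ((LL i (x ^ (2 ^ (k - i) + 1))) ^ 2 + LL i (x ^ (2 ^ (k - i) + 1)))
        = (∑ i ∈ range k, x ^ (2 ^ k + 2 ^ i)) + (∑ i ∈ range k, x ^ (2 ^ (k - i) + 1)) := by
      rw [← sum_add_distrib]
      refine sum_congr rfl fun i hi => ?_
      rw [LL_spec]
      congr 1
      rw [← pow_mul]
      congr 1
      have hik : i ≤ k := le_of_lt (mem_range.mp hi)
      rw [add_mul, one_mul, ← pow_add, Nat.sub_add_cancel hik]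
    rw [hS]
    ring
  have h3 : (∑ i ∈ range k, x ^ (2 ^ (k - i) + 1))
      = x ^ (2 ^ k + 1) + x ^ 2 + ∑ i ∈ range k, x ^ (2 ^ i + 1) := by
    have hrefl := Finset.sum_range_reflect (fun i => x ^ (2 ^ (i + 1) + 1)) k
    have hsub := Finset.sum_range_sub (f := fun i => x ^ (2 ^ i + 1)) k
    rw [sum_sub_distrib] at hsub
    calc ∑ i ∈ range k, x ^ (2 ^ (k - i) + 1)
        = ∑ i ∈ range k, x ^ (2 ^ ((k - 1 - i) + 1) + 1) := by
          refine sum_congr rfl fun i hi => ?_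
          have := mem_range.mp hi
          congr 3
          omega
      _ = ∑ i ∈ range k, x ^ (2 ^ (i + 1) + 1) := hrefl
      _ = x ^ (2 ^ k + 1) + x ^ 2 + ∑ i ∈ range k, x ^ (2 ^ i + 1) := by
          have h0 : (2 : ℕ) ^ 0 + 1 = 2 := by norm_num
          linear_combination hsub - x ^ 2 * htwo
  have h4 : (x ^ (2 ^ k) + x) * LL k x
      = (∑ i ∈ range k, x ^ (2 ^ k + 2 ^ i)) + (∑ i ∈ range k, x ^ (2 ^ i + 1)) := by
    unfold LL
    rw [mul_sum, ← sum_add_distrib]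
    refine sum_congr rfl fun i _ => ?_
    rw [add_mul, ← pow_add, mul_comm x (x ^ 2 ^ i), ← pow_succ]
  linear_combination (LL k x + 1) * h1 - h2 - h3 + h4
    - ((LL k x) ^ 2 + x ^ (2 ^ k + 1) + x + x ^ 2) * htwo



/-- Transport of point counts along an Artin–Schreier substitution. -/
lemma count_eq {F : Type*} [Field F] [CharP F 2] (f g : F → F) (e w : F → F)
    (he : Function.Bijective e)
    (h : ∀ x, g (e x) = f x + ((w x) ^ 2 + w x)) :
    Nat.card {p : F × F // p.2 ^ 2 + p.2 = f p.1} =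
      Nat.card {p : F × F // p.2 ^ 2 + p.2 = g p.1} := by
  have htwo : (2 : F) = 0 := CharTwo.two_eq_zero
  let E := Equiv.ofBijective e he
  apply Nat.card_congr
  refine ⟨fun p => ⟨(E p.1.1, p.1.2 + w p.1.1), ?_⟩,
          fun q => ⟨(E.symm q.1.1, q.1.2 + w (E.symm q.1.1)), ?_⟩, ?_, ?_⟩
  · obtain ⟨⟨a, b⟩, hp⟩ := p
    show (b + w a) ^ 2 + (b + w a) = g (e a)
    simp only at hp
    linear_combination hp - h a + (b * w a) * htwo
  · obtain ⟨⟨a, b⟩, hq⟩ := q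
    show (b + w (E.symm a)) ^ 2 + (b + w (E.symm a)) = f (E.symm a)
    simp only at hq
    have hga : g (e (E.symm a)) = f (E.symm a) + ((w (E.symm a)) ^ 2 + w (E.symm a)) :=
      h (E.symm a)
    have hea : e (E.symm a) = a := E.apply_symm_apply a
    rw [hea] at hga
    linear_combination hq + hga
      + (b * w (E.symm a) + (w (E.symm a)) ^ 2 + w (E.symm a)) * htwo
  · rintro ⟨⟨a, b⟩, hp⟩
    have h1 : E.symm (E a) = a := E.symm_apply_apply a
    apply Subtype.ext
    simp only [h1]
    refine Prod.ext rfl ?_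
    show b + w a + w a = b
    rw [add_assoc, CharTwo.add_self_eq_zero, add_zero]
  · rintro ⟨⟨a, b⟩, hq⟩
    have h1 : E (E.symm a) = a := E.apply_symm_apply a
    apply Subtype.ext
    simp only [h1]
    refine Prod.ext rfl ?_
    show b + w (E.symm a) + w (E.symm a) = b
    rw [add_assoc, CharTwo.add_self_eq_zero, add_zero]

lemma cyc {F : Type*} [Monoid F] {z : F} {c : ℕ} (h : z ^ (2 ^ c) = z) :
    ∀ n, z ^ (2 ^ (n * c)) = z
  | 0 => by simp
  | n + 1 => by
    rw [Nat.succ_mul, pow_add, pow_mul, cyc h n, h]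

lemma LL_inj {F : Type*} [Field F] [CharP F 2] {k m : ℕ} (hk : Odd k) (hm : 1 < m)
    (hgcd : Nat.gcd k m = 1) (hq : ∀ z : F, z ^ (2 ^ m) = z) :
    Function.Injective (LL k : F → F) := by
  have htwo : (2 : F) = 0 := CharTwo.two_eq_zero
  have core : ∀ z : F, LL k z = 0 → z = 0 := by
    intro z hz
    have h := LL_spec k z
    rw [hz] at h
    have hzk : z ^ (2 ^ k) = z := by
      have : z ^ (2 ^ k) + z = 0 := by linear_combination -h
      have h2 := CharTwo.add_self_eq_zero (R := F) z
      linear_combination this - h2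
    -- z ^ (2 ^ gcd) = z, gcd = 1
    obtain ⟨a, -, ha⟩ := Nat.exists_mul_mod_eq_one_of_coprime hgcd hm
    have h1 : z ^ (2 ^ (a * k)) = z := by
      have := cyc hzk a; exact this
    have hdm : k * a = m * (k * a / m) + 1 := by
      conv_lhs => rw [← Nat.div_add_mod (k * a) m]
      rw [ha]
    have h2 : z ^ (2 : ℕ) = z := by
      have := h1
      rw [mul_comm a k, hdm, pow_add, pow_mul, pow_one] at this
      rwa [mul_comm m _, cyc (hq z) _] at this
    have : z * (z - 1) = 0 := by
      have : z ^ (2 : ℕ) = z := h2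
      linear_combination this
    rcases mul_eq_zero.mp this with h0 | h0
    · exact h0
    · exfalso
      have hz1 : z = 1 := by linear_combination h0
      rw [hz1] at hz
      unfold LL at hz
      simp only [one_pow, sum_const, card_range, nsmul_eq_mul, mul_one] at hz
      obtain ⟨j, hj⟩ := hk
      rw [hj] at hz
      push_cast at hz
      rw [htwo] at hz
      simp at hz
  intro a b hab
  have : LL k (a + b) = 0 := by
    rw [LL_add, hab, CharTwo.add_self_eq_zero]
  have hab0 : a + b = 0 := core _ this
  linear_combination hab0 - CharTwo.add_self_eq_zero (R := F) b

end Stmt16Aux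

open Stmt16Aux

/-- For `k ≥ 1` and `m` a positive odd integer with `gcd(k, m) = 1`, the
curves `C_k : y² + y = x^{2^k+1} + x` and `C_1 : y² + y = x³ + x` have the
same number of affine rational points over `F_{2^m}`. -/
theorem stmt_16 (k m : ℕ) (hk : 1 ≤ k) (hm : 0 < m) (hodd : Odd m)
    (hgcd : Nat.gcd k m = 1) :
    Nat.card {p : GaloisField 2 m × GaloisField 2 m //
        p.2 ^ 2 + p.2 = p.1 ^ (2 ^ k + 1) + p.1} =
      Nat.card {p : GaloisField 2 m × GaloisField 2 m //
        p.2 ^ 2 + p.2 = p.1 ^ 3 + p.1} := by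
  classical
  have htwoF : (2 : GaloisField 2 m) = 0 := CharTwo.two_eq_zero
  letI : Fintype (GaloisField 2 m) := Fintype.ofFinite _
  have hq : ∀ z : GaloisField 2 m, z ^ (2 ^ m) = z := by
    intro z
    have hcard : Fintype.card (GaloisField 2 m) = 2 ^ m := by
      rw [← Nat.card_eq_fintype_card, GaloisField.card 2 m hm.ne']
    have hpc := FiniteField.pow_card z
    rwa [hcard] at hpc
  by_cases hm1 : m = 1
  · subst hm1
    have h2 : ∀ x : GaloisField 2 1, x ^ (2 : ℕ) = x := by
      intro x; have := hq x; norm_num at this; exact this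
    have hpown : ∀ (x : GaloisField 2 1) (n : ℕ), x ^ (n + 1) = x := by
      intro x n
      induction n with
      | zero => rw [pow_one]
      | succ n ih =>
          rw [pow_succ, ih]
          have := h2 x; rw [pow_two] at this; exact this
    refine count_eq (fun x => x ^ (2 ^ k + 1) + x) (fun y => y ^ 3 + y) id (fun _ => 0)
      Function.bijective_id ?_
    intro x
    simp only [id]
    have e1 : x ^ (2 ^ k + 1) = x := hpown x (2 ^ k)
    have e3 : x ^ (3 : ℕ) = x := by have := hpown x 2; norm_num at this; exact this
    rw [e1, e3]; ring
  · have hm2 : 1 < m := by omega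
    set k₁ := k % m with hk₁def
    have hk₁lt : k₁ < m := Nat.mod_lt k (by omega)
    have hgcd₁ : Nat.gcd k₁ m = 1 := by
      have h := hgcd
      rw [Nat.gcd_comm, Nat.gcd_rec] at h
      exact h
    have hk₁ne : k₁ ≠ 0 := by
      intro h0
      rw [h0] at hgcd₁
      simp at hgcd₁
      omega
    -- step A : reduce exponent k to k₁
    have hA : ∀ x : GaloisField 2 m, x ^ (2 ^ k) = x ^ (2 ^ k₁) := by
      intro x
      conv_lhs => rw [show k = m * (k / m) + k₁ from (Nat.div_add_mod k m).symm]
      rw [pow_add, pow_mul, mul_comm m (k / m), cyc (hq x) (k / m)]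
    have hstepA :
        Nat.card {p : GaloisField 2 m × GaloisField 2 m //
          p.2 ^ 2 + p.2 = p.1 ^ (2 ^ k + 1) + p.1} =
        Nat.card {p : GaloisField 2 m × GaloisField 2 m //
          p.2 ^ 2 + p.2 = p.1 ^ (2 ^ k₁ + 1) + p.1} := by
      refine count_eq (fun x => x ^ (2 ^ k + 1) + x) (fun x => x ^ (2 ^ k₁ + 1) + x)
        id (fun _ => 0) Function.bijective_id ?_
      intro x
      simp only [id]
      rw [pow_add, pow_add, pow_one, hA x]
      ring
    -- main step for odd exponents
    have main : ∀ j : ℕ, Odd j → Nat.gcd j m = 1 →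
        Nat.card {p : GaloisField 2 m × GaloisField 2 m //
          p.2 ^ 2 + p.2 = p.1 ^ (2 ^ j + 1) + p.1} =
        Nat.card {p : GaloisField 2 m × GaloisField 2 m //
          p.2 ^ 2 + p.2 = p.1 ^ 3 + p.1} := by
      intro j hj hjg
      refine count_eq (fun x => x ^ (2 ^ j + 1) + x) (fun y => y ^ 3 + y) (LL j) (WW j) ?_ ?_
      · exact Finite.injective_iff_bijective.mp (LL_inj hj hm2 hjg hq)
      · intro x
        have := key j x
        linear_combination this
    rw [hstepA]
    rcases Nat.even_or_odd k₁ with hev | hod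
    · -- even case: pass to k₂ = m - k₁
      set k₂ := m - k₁ with hk₂def
      have hk₂odd : Odd k₂ := Nat.Odd.sub_even hk₁lt.le hodd hev
      have hk₂gcd : Nat.gcd k₂ m = 1 := by
        have hd1 : Nat.gcd k₂ m ∣ k₁ := by
          have h1 : Nat.gcd k₂ m ∣ m := Nat.gcd_dvd_right _ _
          have h2 : Nat.gcd k₂ m ∣ k₂ := Nat.gcd_dvd_left _ _
          have := Nat.dvd_sub h1 h2
          rwa [Nat.sub_sub_self hk₁lt.le] at this
        have : Nat.gcd k₂ m ∣ Nat.gcd k₁ m := Nat.dvd_gcd hd1 (Nat.gcd_dvd_right _ _)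
        rw [hgcd₁] at this
        exact Nat.dvd_one.mp this
      have hstepB :
          Nat.card {p : GaloisField 2 m × GaloisField 2 m //
            p.2 ^ 2 + p.2 = p.1 ^ (2 ^ k₁ + 1) + p.1} =
          Nat.card {p : GaloisField 2 m × GaloisField 2 m //
            p.2 ^ 2 + p.2 = p.1 ^ (2 ^ k₂ + 1) + p.1} := by
        refine count_eq (fun x => x ^ (2 ^ k₁ + 1) + x) (fun x => x ^ (2 ^ k₂ + 1) + x)
          id (fun x => LL k₂ (x ^ (2 ^ k₁ + 1))) Function.bijective_id ?_
        intro x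
        simp only [id]
        have hpp : (x ^ (2 ^ k₁ + 1)) ^ (2 ^ k₂) = x ^ (2 ^ k₂ + 1) := by
          rw [← pow_mul]
          have hexp : (2 ^ k₁ + 1) * 2 ^ k₂ = 2 ^ m + 2 ^ k₂ := by
            rw [add_mul, one_mul, ← pow_add, Nat.add_sub_cancel' hk₁lt.le]
          rw [hexp, pow_add, hq x, mul_comm, ← pow_succ]
        have hs := LL_spec k₂ (x ^ (2 ^ k₁ + 1))
        rw [hpp] at hs
        linear_combination -hs - x ^ (2 ^ k₁ + 1) * htwoF
      rw [hstepB]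
      exact main k₂ hk₂odd hk₂gcd
    · exact main k₁ hod hgcd₁
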